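/- Let n ≥ 2, α = 2/n, R > 0, T > 0, and define Ψ(x,t) = (n^{α−1})^{1/α} ( T / ( (|x|² + R² e^{4nt/T}) (t/T + 1) ) )^{1/α}. Then for all x ∈ ℝⁿ and 0 < t < T one has the identity ∂_t Ψ − Σ_i ∂_{x_i}( n^{α−1} Ψ^{−α} ∂_{x_i} Ψ ) = −[ 2n ((T−t)/T) · R² e^{4nt/T}/(|x|² + R² e^{4nt/T}) + 1/(t/T + 1) ] · Ψ/(αT), and consequently ∂_t Ψ − Σ_i ∂_{x_i}( n^{α−1} Ψ^{−α} ∂_{x_i} Ψ ) < −Ψ/(2αT) < 0. -/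

import Mathlib

set_option maxHeartbeats 1000000

/-- Partial derivative in the `i`-th coordinate direction. -/
noncomputable def pd {n : ℕ} (i : Fin n) (f : EuclideanSpace ℝ (Fin n) → ℝ)
    (x : EuclideanSpace ℝ (Fin n)) : ℝ :=
  fderiv ℝ f x (EuclideanSpace.single i (1 : ℝ))

lemma normsq_fderiv {n : ℕ} (x : EuclideanSpace ℝ (Fin n)) :
    HasFDerivAt (fun y : EuclideanSpace ℝ (Fin n) => ‖y‖ ^ 2)
      ((2 : ℕ) • (innerSL ℝ x)) x :=
  (hasStrictFDerivAt_norm_sq x).hasFDerivAt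

lemma pd_radial {n : ℕ} (f : ℝ → ℝ) (f' : ℝ) (x : EuclideanSpace ℝ (Fin n))
    (hf : HasDerivAt f f' (‖x‖ ^ 2)) (i : Fin n) :
    pd i (fun y => f (‖y‖ ^ 2)) x = f' * (2 * x i) := by
  have h := hf.comp_hasFDerivAt x (normsq_fderiv x)
  have h' : HasFDerivAt (fun y : EuclideanSpace ℝ (Fin n) => f (‖y‖ ^ 2))
      (f' • (2 : ℕ) • (innerSL ℝ x)) x := h
  rw [pd, h'.fderiv]
  simp [EuclideanSpace.inner_single_right, real_inner_comm]

lemma pd_radial_mul {n : ℕ} (f : ℝ → ℝ) (f' : ℝ) (x : EuclideanSpace ℝ (Fin n))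
    (hf : HasDerivAt f f' (‖x‖ ^ 2)) (i : Fin n) :
    pd i (fun y => f (‖y‖ ^ 2) * y i) x =
      f' * (2 * x i) * x i + f (‖x‖ ^ 2) := by
  have h1 := hf.comp_hasFDerivAt x (normsq_fderiv x)
  have h1' : HasFDerivAt (fun y : EuclideanSpace ℝ (Fin n) => f (‖y‖ ^ 2))
      (f' • (2 : ℕ) • (innerSL ℝ x)) x := h1
  have h2 : HasFDerivAt (fun y : EuclideanSpace ℝ (Fin n) => (y i : ℝ))
      (EuclideanSpace.proj i : EuclideanSpace ℝ (Fin n) →L[ℝ] ℝ) x :=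
    (EuclideanSpace.proj (𝕜 := ℝ) i).hasFDerivAt
  have h : HasFDerivAt (fun y : EuclideanSpace ℝ (Fin n) => f (‖y‖ ^ 2) * y i) _ x := h1'.mul h2
  rw [pd, h.fderiv]
  simp [EuclideanSpace.inner_single_right, EuclideanSpace.single_apply,
    real_inner_comm]
  ring

lemma hasDerivAt_shift_rpow (c q a s : ℝ) (h : 0 < s + a) :
    HasDerivAt (fun u : ℝ => c * (u + a) ^ (-q)) (c * (-q * (s + a) ^ (-q - 1))) s := by
  have h1 : HasDerivAt (fun u : ℝ => u + a) 1 s := (hasDerivAt_id s).add_const a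
  have h2 := (Real.hasDerivAt_rpow_const (x := s + a) (p := -q) (Or.inl h.ne')).comp s h1
  have h3 := h2.const_mul c
  simpa [Function.comp] using h3

theorem critical_barrier_subsolution (n : ℕ) (hn : 2 ≤ n) (α R T : ℝ)
    (hα : α = 2 / (n : ℝ)) (hR : 0 < R) (hT : 0 < T)
    (Ψ : EuclideanSpace ℝ (Fin n) → ℝ → ℝ)
    (hΨ : ∀ x s, Ψ x s = ((n : ℝ) ^ (α - 1)) ^ (1 / α) *
      (T / ((‖x‖ ^ 2 + R ^ 2 * Real.exp (4 * n * s / T)) * (s / T + 1))) ^ (1 / α)) :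
    ∀ (x : EuclideanSpace ℝ (Fin n)) (t : ℝ), 0 < t → t < T →
      (deriv (Ψ x) t -
          ∑ i, pd i (fun y =>
            (n : ℝ) ^ (α - 1) * (Ψ y t) ^ (-α) * pd i (fun z => Ψ z t) y) x =
        -(2 * n * ((T - t) / T) *
            (R ^ 2 * Real.exp (4 * n * t / T)) /
              (‖x‖ ^ 2 + R ^ 2 * Real.exp (4 * n * t / T)) +
          1 / (t / T + 1)) * (Ψ x t / (α * T))) ∧
      (deriv (Ψ x) t -
          ∑ i, pd i (fun y =>
            (n : ℝ) ^ (α - 1) * (Ψ y t) ^ (-α) * pd i (fun z => Ψ z t) y) x <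
        -(Ψ x t / (2 * α * T))) ∧
      (-(Ψ x t / (2 * α * T)) < 0) := by
  intro x t ht ht'
  have hn2 : (2 : ℝ) ≤ (n : ℝ) := by exact_mod_cast hn
  have hnpos : (0 : ℝ) < n := by linarith
  have hαpos : 0 < α := by rw [hα]; positivity
  have hα0 : α ≠ 0 := hαpos.ne'
  set p : ℝ := 1 / α with hpdef
  have hp : p = (n : ℝ) / 2 := by rw [hpdef, hα, one_div_div]
  have hp1 : 1 ≤ p := by rw [hp]; linarith
  have hppos : 0 < p := by linarith
  set C : ℝ := ((n : ℝ) ^ (α - 1)) ^ p with hCdef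
  have hnα : (0 : ℝ) < (n : ℝ) ^ (α - 1) := Real.rpow_pos_of_pos hnpos _
  have hC : 0 < C := Real.rpow_pos_of_pos hnα _
  set a : ℝ := R ^ 2 * Real.exp (4 * n * t / T) with hadef
  have ha : 0 < a := by rw [hadef]; positivity
  have hH : 0 < t / T + 1 := by positivity
  have hG : ∀ y : EuclideanSpace ℝ (Fin n), 0 < ‖y‖ ^ 2 + a := fun y => by positivity
  set K : ℝ := C * (T / (t / T + 1)) ^ p with hKdef
  have hK : 0 < K := by
    rw [hKdef]; exact mul_pos hC (Real.rpow_pos_of_pos (by positivity) _)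
  -- radial form of Ψ(·, t)
  have hrad : ∀ y : EuclideanSpace ℝ (Fin n), Ψ y t = K * (‖y‖ ^ 2 + a) ^ (-p) := by
    intro y
    rw [hΨ y t, ← hadef, hKdef]
    have h1 : T / ((‖y‖ ^ 2 + a) * (t / T + 1)) = (T / (t / T + 1)) / (‖y‖ ^ 2 + a) := by
      rw [mul_comm, ← div_div]
    rw [h1, Real.div_rpow (by positivity) (hG y).le, Real.rpow_neg (hG y).le]
    ring
  have hΨpos : 0 < Ψ x t := by
    rw [hrad x]; exact mul_pos hK (Real.rpow_pos_of_pos (hG x) _)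
  -- n^(α-1) * Ψ^(-α) = G H / T
  have hΨneg : ∀ y : EuclideanSpace ℝ (Fin n),
      (n : ℝ) ^ (α - 1) * (Ψ y t) ^ (-α) = (‖y‖ ^ 2 + a) * (t / T + 1) / T := by
    intro y
    have hGy := hG y
    rw [hrad y, Real.mul_rpow hK.le (Real.rpow_nonneg hGy.le _),
      ← Real.rpow_mul hGy.le]
    have e1 : (-p) * (-α) = 1 := by
      rw [hpdef]; field_simp
    rw [e1, Real.rpow_one, hKdef,
      Real.mul_rpow hC.le (Real.rpow_nonneg (by positivity) _),
      ← Real.rpow_mul (by positivity : (0:ℝ) ≤ T / (t / T + 1)), hCdef,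
      ← Real.rpow_mul hnα.le]
    have e2 : p * (-α) = -1 := by rw [hpdef]; field_simp
    rw [e2, Real.rpow_neg_one, Real.rpow_neg_one]
    field_simp
  -- space derivatives of Ψ(·,t)
  have pdΨ : ∀ (y : EuclideanSpace ℝ (Fin n)) (i : Fin n),
      pd i (fun z => Ψ z t) y = K * (-p * (‖y‖ ^ 2 + a) ^ (-p - 1)) * (2 * y i) := by
    intro y i
    have hfun : (fun z : EuclideanSpace ℝ (Fin n) => Ψ z t)
        = fun z => (fun s : ℝ => K * (s + a) ^ (-p)) (‖z‖ ^ 2) := funext fun z => hrad z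
    rw [hfun]
    exact pd_radial _ _ y (hasDerivAt_shift_rpow K p a _ (hG y)) i
  set M : ℝ := -(2 * p * K * (t / T + 1) / T) with hMdef
  have flux_eq : ∀ i : Fin n,
      (fun y : EuclideanSpace ℝ (Fin n) =>
          (n : ℝ) ^ (α - 1) * (Ψ y t) ^ (-α) * pd i (fun z => Ψ z t) y)
        = fun y => M * (‖y‖ ^ 2 + a) ^ (-p) * y i := by
    intro i
    funext y
    rw [pdΨ y i, hΨneg y]
    have hGp : (‖y‖ ^ 2 + a) ^ (-p) = (‖y‖ ^ 2 + a) ^ (-p - 1) * (‖y‖ ^ 2 + a) := by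
      rw [← Real.rpow_add_one (hG y).ne' (-p - 1)]
      norm_num
    rw [hMdef, hGp]
    ring
  have hpd_flux : ∀ i : Fin n,
      pd i (fun y : EuclideanSpace ℝ (Fin n) =>
          (n : ℝ) ^ (α - 1) * (Ψ y t) ^ (-α) * pd i (fun z => Ψ z t) y) x
        = M * (-p * (‖x‖ ^ 2 + a) ^ (-p - 1)) * (2 * x i) * x i
            + M * (‖x‖ ^ 2 + a) ^ (-p) := by
    intro i
    rw [flux_eq i]
    exact pd_radial_mul _ _ x (hasDerivAt_shift_rpow M p a _ (hG x)) i
  have hx2 : ∑ i, (x i) ^ 2 = ‖x‖ ^ 2 := by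
    rw [EuclideanSpace.norm_eq, Real.sq_sqrt (by positivity)]
    exact Finset.sum_congr rfl fun i _ => by rw [Real.norm_eq_abs, sq_abs]
  have hsum : ∑ i, pd i (fun y : EuclideanSpace ℝ (Fin n) =>
          (n : ℝ) ^ (α - 1) * (Ψ y t) ^ (-α) * pd i (fun z => Ψ z t) y) x
      = M * (-p * (‖x‖ ^ 2 + a) ^ (-p - 1)) * 2 * ‖x‖ ^ 2
          + n * (M * (‖x‖ ^ 2 + a) ^ (-p)) := by
    rw [Finset.sum_congr rfl fun i _ => hpd_flux i, Finset.sum_add_distrib,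
      Finset.sum_const, Finset.card_univ, Fintype.card_fin, nsmul_eq_mul]
    congr 1
    rw [← hx2, Finset.mul_sum]
    exact Finset.sum_congr rfl fun i _ => by ring
  -- time derivative
  have hexp : HasDerivAt (fun s : ℝ => Real.exp (4 * n * s / T))
      (Real.exp (4 * n * t / T) * (4 * n / T)) t := by
    have h1 : HasDerivAt (fun s : ℝ => 4 * (n : ℝ) * s / T) (4 * n / T) t := by
      simpa using ((hasDerivAt_id t).const_mul (4 * (n : ℝ))).div_const T
    exact h1.exp
  have hw1 : HasDerivAt (fun s : ℝ => ‖x‖ ^ 2 + R ^ 2 * Real.exp (4 * n * s / T))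
      (a * (4 * n / T)) t := by
    have := (hexp.const_mul (R ^ 2)).const_add (‖x‖ ^ 2)
    refine this.congr_deriv ?_
    rw [hadef]; ring
  have hw2 : HasDerivAt (fun s : ℝ => s / T + 1) (1 / T) t := by
    simpa using ((hasDerivAt_id t).div_const T).add_const 1
  have hw := hw1.mul hw2
  have hwt : (fun s : ℝ => (‖x‖ ^ 2 + R ^ 2 * Real.exp (4 * n * s / T)) * (s / T + 1)) t
      = (‖x‖ ^ 2 + a) * (t / T + 1) := by simp [hadef]
  have hwpos : 0 < (‖x‖ ^ 2 + a) * (t / T + 1) := mul_pos (hG x) hH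
  have hv : HasDerivAt
      (fun s : ℝ => T / ((‖x‖ ^ 2 + R ^ 2 * Real.exp (4 * n * s / T)) * (s / T + 1)))
      (-(T * (a * (4 * n / T) * (t / T + 1) + (‖x‖ ^ 2 + a) * (1 / T)))
        / (((‖x‖ ^ 2 + a) * (t / T + 1)) ^ 2)) t := by
    have := (hasDerivAt_const t T).div hw (by positivity)
    refine this.congr_deriv ?_
    simp only [hadef, Pi.mul_apply]
    ring
  have hvt : 0 < T / ((‖x‖ ^ 2 + a) * (t / T + 1)) := by positivity
  have hD : HasDerivAt
      (fun s : ℝ => C * (T / ((‖x‖ ^ 2 + R ^ 2 * Real.exp (4 * n * s / T)) * (s / T + 1))) ^ p)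
      (C * (p * (T / ((‖x‖ ^ 2 + a) * (t / T + 1))) ^ (p - 1) *
        (-(T * (a * (4 * n / T) * (t / T + 1) + (‖x‖ ^ 2 + a) * (1 / T)))
          / (((‖x‖ ^ 2 + a) * (t / T + 1)) ^ 2)))) t := by
    have h2 := (Real.hasDerivAt_rpow_const
      (x := T / ((‖x‖ ^ 2 + a) * (t / T + 1))) (p := p) (Or.inl hvt.ne')).comp t hv
    simpa [Function.comp] using h2.const_mul C
  have hderiv : deriv (Ψ x) t
      = C * (p * (T / ((‖x‖ ^ 2 + a) * (t / T + 1))) ^ (p - 1) *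
        (-(T * (a * (4 * n / T) * (t / T + 1) + (‖x‖ ^ 2 + a) * (1 / T)))
          / (((‖x‖ ^ 2 + a) * (t / T + 1)) ^ 2))) := by
    have hfun : Ψ x = fun s =>
        C * (T / ((‖x‖ ^ 2 + R ^ 2 * Real.exp (4 * n * s / T)) * (s / T + 1))) ^ p :=
      funext fun s => hΨ x s
    rw [hfun]
    exact hD.deriv
  -- the main identity
  have hmain : deriv (Ψ x) t -
      ∑ i, pd i (fun y =>
        (n : ℝ) ^ (α - 1) * (Ψ y t) ^ (-α) * pd i (fun z => Ψ z t) y) x =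
      -(2 * n * ((T - t) / T) * a / (‖x‖ ^ 2 + a) + 1 / (t / T + 1)) *
        (Ψ x t / (α * T)) := by
    rw [hderiv, hsum, hrad x]
    have e3 : (T / ((‖x‖ ^ 2 + a) * (t / T + 1))) ^ (p - 1)
        = (T / ((‖x‖ ^ 2 + a) * (t / T + 1))) ^ p / (T / ((‖x‖ ^ 2 + a) * (t / T + 1))) := by
      rw [Real.rpow_sub hvt, Real.rpow_one]
    have e4 : (T / ((‖x‖ ^ 2 + a) * (t / T + 1))) ^ p
        = T ^ p / ((‖x‖ ^ 2 + a) ^ p * (t / T + 1) ^ p) := by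
      rw [Real.div_rpow hT.le (by positivity), Real.mul_rpow (hG x).le hH.le]
    have e5 : (‖x‖ ^ 2 + a) ^ (-p) = ((‖x‖ ^ 2 + a) ^ p)⁻¹ := Real.rpow_neg (hG x).le p
    have e6 : (‖x‖ ^ 2 + a) ^ (-p - 1) = ((‖x‖ ^ 2 + a) ^ p * (‖x‖ ^ 2 + a))⁻¹ := by
      rw [show (-p - 1 : ℝ) = -(p + 1) by ring, Real.rpow_neg (hG x).le,
        Real.rpow_add (hG x), Real.rpow_one]
    have e7 : (T / (t / T + 1)) ^ p = T ^ p / (t / T + 1) ^ p := Real.div_rpow hT.le hH.le p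
    rw [e3, e4, e5, e6, hMdef, hKdef, e7]
    have hGp : (0 : ℝ) < (‖x‖ ^ 2 + a) ^ p := Real.rpow_pos_of_pos (hG x) p
    have hHp : (0 : ℝ) < (t / T + 1) ^ p := Real.rpow_pos_of_pos hH p
    have hTp : (0 : ℝ) < T ^ p := Real.rpow_pos_of_pos hT p
    rw [hα, hp]
    have hn0 : (n : ℝ) ≠ 0 := hnpos.ne'
    field_simp
    ring
  refine ⟨hmain, ?_, ?_⟩
  · rw [hmain]
    have hQ : 0 < Ψ x t / (α * T) := div_pos hΨpos (by positivity)
    have h1 : 0 ≤ 2 * n * ((T - t) / T) * a / (‖x‖ ^ 2 + a) := by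
      apply div_nonneg _ (hG x).le
      have hTt : (0:ℝ) ≤ (T - t) / T := div_nonneg (by linarith) hT.le
      have : (0:ℝ) ≤ 2 * n := by positivity
      exact mul_nonneg (mul_nonneg this hTt) ha.le
    have h2 : (1:ℝ)/2 < 1 / (t / T + 1) := by
      rw [div_lt_div_iff₀ two_pos hH]
      have : t / T < 1 := (div_lt_one hT).2 ht'
      linarith
    have hB : (1:ℝ)/2 < 2 * n * ((T - t) / T) * a / (‖x‖ ^ 2 + a) + 1 / (t / T + 1) := by
      linarith
    have hmul := mul_lt_mul_of_pos_right hB hQ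
    have e : Ψ x t / (2 * α * T) = 1 / 2 * (Ψ x t / (α * T)) := by ring
    linarith [hmul]
  · have : 0 < Ψ x t / (2 * α * T) := div_pos hΨpos (by positivity)
    linarith
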